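/- Let F be a finite field of cardinality q, K a finite field that is an F-algebra, n a positive integer coprime to q, ζ ∈ K a primitive n-th root of unity, d a positive divisor of n, and γ an integer. Then the element ζ^{γ·(n/d)} lies in the range of the algebra map F → K (equivalently, the binomial X^{n/d} − ζ^{γ·(n/d)} has coefficients in F) if and only if γ·q ≡ γ (mod d). -/
import Mathlib

open Polynomial in
lemma mem_range_algebraMap_iff_pow_card {F K : Type*} [Field F] [Fintype F] [Field K]
    [Fintype K] [Algebra F K] (q : ℕ) (hq : Fintype.card F = q) (x : K) :
    x ∈ Set.range (algebraMap F K) ↔ x ^ q = x := by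
  classical
  constructor
  · rintro ⟨a, rfl⟩
    rw [← map_pow]
    congr 1
    rw [← hq]
    exact FiniteField.pow_card a
  · intro hx
    have hq1 : 1 < q := hq ▸ Fintype.one_lt_card
    set P : K[X] := X ^ q - X with hP
    have hPne : P ≠ 0 := FiniteField.X_pow_card_sub_X_ne_zero K hq1
    have hdeg : P.natDegree = q := FiniteField.X_pow_card_sub_X_natDegree_eq K hq1
    have hroot : ∀ y : K, y ∈ Set.range (algebraMap F K) → P.IsRoot y := by
      rintro y ⟨a, rfl⟩
      simp only [hP, IsRoot.def, eval_sub, eval_pow, eval_X, sub_eq_zero, ← map_pow]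
      congr 1
      rw [← hq]
      exact FiniteField.pow_card a
    set S : Finset K := Finset.univ.image (algebraMap F K) with hS
    have hScard : S.card = q := by
      rw [hS, Finset.card_image_of_injective _ (algebraMap F K).injective,
        Finset.card_univ, hq]
    have hsub : S ⊆ P.roots.toFinset := by
      intro y hy
      rw [Multiset.mem_toFinset, mem_roots hPne]
      rw [hS, Finset.mem_image] at hy
      obtain ⟨a, -, rfl⟩ := hy
      exact hroot _ ⟨a, rfl⟩
    have hcard : P.roots.toFinset.card ≤ q := by
      calc P.roots.toFinset.card ≤ Multiset.card P.roots := Multiset.toFinset_card_le _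
        _ ≤ P.natDegree := P.card_roots' 
        _ = q := hdeg
    have hEq : S = P.roots.toFinset := Finset.eq_of_subset_of_card_le hsub (hScard ▸ hcard)
    have hxroot : x ∈ P.roots.toFinset := by
      rw [Multiset.mem_toFinset, mem_roots hPne]
      simp [hP, IsRoot.def, sub_eq_zero, hx]
    rw [← hEq, hS, Finset.mem_image] at hxroot
    obtain ⟨a, -, rfl⟩ := hxroot
    exact ⟨a, rfl⟩

/-- Let `F` be a finite field of cardinality `q`, `K` a finite field that is an
`F`-algebra, `n` coprime to `q`, `ζ ∈ K` a primitive `n`-th root of unity, `d` a positive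
divisor of `n`, and `γ` an integer. Then `ζ^(γ·(n/d))` lies in the image of `F` in `K`
iff `γ·q ≡ γ (mod d)`. -/
theorem binomial_defined_over_base_iff {F K : Type*} [Field F] [Fintype F] [Field K]
    [Fintype K] [Algebra F K] (q : ℕ) (hq : Fintype.card F = q)
    (n : ℕ) (hn : 0 < n) (hco : Nat.Coprime n q)
    (ζ : K) (hζ : IsPrimitiveRoot ζ n) (d : ℕ) (hd : 0 < d) (hdn : d ∣ n) (γ : ℤ) :
    ζ ^ (γ * ((n / d : ℕ) : ℤ)) ∈ Set.range (algebraMap F K) ↔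
      γ * (q : ℤ) ≡ γ [ZMOD (d : ℤ)] := by
  set m : ℕ := n / d with hm
  have hη : IsPrimitiveRoot (ζ ^ m) d := hζ.pow hn (by rw [hm, Nat.div_mul_cancel hdn])
  have hx : ζ ^ (γ * (m : ℤ)) = (ζ ^ m) ^ γ := by
    rw [mul_comm, zpow_mul, zpow_natCast]
  rw [hx, mem_range_algebraMap_iff_pow_card q hq]
  rw [← zpow_natCast _ q, ← zpow_mul]
  have key : (ζ ^ m) ^ (γ * (q : ℤ)) = (ζ ^ m) ^ γ ↔ (ζ ^ m) ^ (γ * (q : ℤ) - γ) = 1 := by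
    have hne : ζ ^ m ≠ 0 := hη.ne_zero hd.ne'
    rw [zpow_sub₀ hne, div_eq_one_iff_eq (zpow_ne_zero _ hne)]
  rw [key, hη.zpow_eq_one_iff_dvd, ← Int.modEq_iff_dvd]
  exact ⟨Int.ModEq.symm, Int.ModEq.symm⟩
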